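/- Let 0 < ε_1 < … < ε_m be tolerances and let c be the cost values of the dynamic program. For every k with 2 ≤ k ≤ m and every shortcut (i,j) (with i < j) that is valid for ε_{k−1}, it holds that c(k,(i,j)) = c(k−1,(i,j)) + 1. -/

import Mathlib

open Metric

noncomputable section

/-- The Euclidean plane. -/
abbrev Pt : Type := EuclideanSpace ℝ (Fin 2)

/-- The subcurve `⟨p i, …, p j⟩`: the union of the segments between consecutive vertices. -/
def subcurve {n : ℕ} (p : Fin n → Pt) (i j : Fin n) : Set Pt :=
  ⋃ (t : Fin n) (_ : i ≤ t ∧ t < j) (h : (t : ℕ) + 1 < n),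
    segment ℝ (p t) (p ⟨(t : ℕ) + 1, h⟩)

/-- The (Hausdorff-distance) error of the shortcut `(i, j)`. -/
def err {n : ℕ} (p : Fin n → Pt) (i j : Fin n) : ℝ :=
  Metric.hausdorffDist (segment ℝ (p i) (p j)) (subcurve p i j)

/-- The edges (consecutive pairs) of a path given as a list of vertices. -/
def edges {n : ℕ} (l : List (Fin n)) : List (Fin n × Fin n) := l.zip l.tail

/-- `l` is a path from `i` to `j` at tolerance `ε`: a strictly increasing sequence of
indices starting at `i`, ending at `j`, all of whose edges are valid shortcuts for `ε`. -/
def IsPath {n : ℕ} (p : Fin n → Pt) (ε : ℝ) (i j : Fin n) (l : List (Fin n)) : Prop :=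
  l.Chain' (· < ·) ∧ l.head? = some i ∧ l.getLast? = some j ∧
    ∀ e ∈ edges l, err p e.1 e.2 ≤ ε

/-- The cost of a path: the sum of the costs of its edges. -/
def pathCost {n : ℕ} {α : Type*} [AddCommMonoid α] (c : Fin n → Fin n → α)
    (l : List (Fin n)) : α :=
  ((edges l).map (fun e => c e.1 e.2)).sum

/-- Minimum cost (natural-valued) of a path from `i` to `j` at tolerance `ε`. -/
def minCost {n : ℕ} (p : Fin n → Pt) (ε : ℝ) (c : Fin n → Fin n → ℕ) (i j : Fin n) : ℕ :=
  sInf {s : ℕ | ∃ l, IsPath p ε i j l ∧ pathCost c l = s}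

/-- Minimum cost (real-valued) of a path from `i` to `j` at tolerance `ε`. -/
def minCostR {n : ℕ} (p : Fin n → Pt) (ε : ℝ) (c : Fin n → Fin n → ℝ) (i j : Fin n) : ℝ :=
  sInf {s : ℝ | ∃ l, IsPath p ε i j l ∧ pathCost c l = s}


section Aux

variable {n : ℕ}

lemma edges_cons (a b : Fin n) (l : List (Fin n)) :
    edges (a :: b :: l) = (a, b) :: edges (b :: l) := rfl

lemma edges_pair (a b : Fin n) : edges [a, b] = [(a, b)] := rfl

lemma pathCost_pair {α : Type*} [AddCommMonoid α] (c : Fin n → Fin n → α) (a b : Fin n) :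
    pathCost c [a, b] = c a b := by simp [pathCost, edges_pair]

lemma edges_rel {R : Fin n → Fin n → Prop} :
    ∀ l : List (Fin n), l.Chain' R → ∀ e ∈ edges l, R e.1 e.2
  | [], _, e, he => by simp [edges] at he
  | [a], _, e, he => by simp [edges] at he
  | a :: b :: l, h, e, he => by
      rw [edges_cons] at he
      rcases List.mem_cons.1 he with rfl | he
      · exact (List.isChain_cons_cons.1 h).1
      · exact edges_rel (b :: l) (List.isChain_cons_cons.1 h).2 e he

lemma isPath_pair {p : Fin n → Pt} {ε : ℝ} {i j : Fin n} (hij : i < j)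
    (h : err p i j ≤ ε) : IsPath p ε i j [i, j] := by
  refine ⟨List.isChain_pair.2 hij, rfl, rfl, ?_⟩
  intro e he
  rw [edges_pair] at he
  rcases List.mem_singleton.1 he with rfl
  exact h

lemma isPath_cons {p : Fin n → Pt} {ε : ℝ} {x y z : Fin n} {l : List (Fin n)}
    (h : IsPath p ε y z l) (hxy : x < y) (he : err p x y ≤ ε) :
    IsPath p ε x z (x :: l) := by
  obtain ⟨hc, hh, hl, hE⟩ := h
  obtain ⟨t, rfl⟩ : ∃ t, l = y :: t := by
    cases l with
    | nil => simp at hh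
    | cons a t => simp at hh; exact ⟨t, by rw [hh]⟩
  refine ⟨List.isChain_cons_cons.2 ⟨hxy, hc⟩, rfl, by simpa using hl, ?_⟩
  intro e hee
  rw [edges_cons] at hee
  rcases List.mem_cons.1 hee with rfl | hee
  · exact he
  · exact hE e hee

lemma pathCost_cons {α : Type*} [AddCommMonoid α] (c : Fin n → Fin n → α)
    (x y : Fin n) (t : List (Fin n)) :
    pathCost c (x :: y :: t) = c x y + pathCost c (y :: t) := by
  simp [pathCost, edges_cons]

lemma edges_append (y : Fin n) :
    ∀ (l1 t : List (Fin n)), l1.getLast? = some y →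
      edges (l1 ++ t) = edges l1 ++ edges (y :: t)
  | [], t, h => by simp at h
  | [a], t, h => by
      simp at h; subst h; simp [edges]
  | a :: b :: l, t, h => by
      have h' : (b :: l).getLast? = some y := by
        rwa [List.getLast?_cons_cons] at h
      have e1 : (a :: b :: l) ++ t = a :: ((b :: l) ++ t) := rfl
      have e2 : (b :: l) ++ t = b :: (l ++ t) := rfl
      rw [e1, e2, edges_cons, ← e2, edges_append y (b :: l) t h', edges_cons]
      rfl

lemma isPath_append {p : Fin n → Pt} {ε : ℝ} {x y z : Fin n} {l1 l2 : List (Fin n)}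
    (h1 : IsPath p ε x y l1) (h2 : IsPath p ε y z l2) :
    IsPath p ε x z (l1 ++ l2.tail) ∧
      ∀ (c : Fin n → Fin n → ℕ), pathCost c (l1 ++ l2.tail) = pathCost c l1 + pathCost c l2 := by
  obtain ⟨hc1, hh1, hl1, hE1⟩ := h1
  obtain ⟨hc2, hh2, hl2, hE2⟩ := h2
  obtain ⟨t, rfl⟩ : ∃ t, l2 = y :: t := by
    cases l2 with
    | nil => simp at hh2
    | cons a t => simp at hh2; exact ⟨t, by rw [hh2]⟩
  have hEdges : edges (l1 ++ t) = edges l1 ++ edges (y :: t) := edges_append y l1 t hl1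
  constructor
  · refine ⟨?_, ?_, ?_, ?_⟩
    · refine hc1.append (hc2.tail) ?_
      intro a ha b hb
      have ha' : a = y := by
        rw [hl1] at ha; exact (Option.some_inj.1 ha.symm)
      cases t with
      | nil => simp at hb
      | cons cc t' =>
        simp at hb
        rw [ha', ← hb]
        exact (List.isChain_cons_cons.1 hc2).1
    · cases l1 with
      | nil => simp at hh1
      | cons a l1' => simpa using hh1
    · cases t with
      | nil =>
        simp only [List.getLast?_singleton] at hl2
        simpa [hl2] using hl1
      | cons cc t' =>
        rw [List.getLast?_append]
        have ht' : (cc :: t').getLast? = some z := by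
          rwa [List.getLast?_cons_cons] at hl2
        simp [ht']
    · intro e he
      rw [List.tail_cons, hEdges] at he
      rcases List.mem_append.1 he with he | he
      · exact hE1 e he
      · exact hE2 e he
  · intro c
    simp [pathCost, hEdges]

lemma subcurve_succ (p : Fin n → Pt) (i : Fin n) (h : (i : ℕ) + 1 < n) :
    subcurve p i ⟨(i : ℕ) + 1, h⟩ = segment ℝ (p i) (p ⟨(i : ℕ) + 1, h⟩) := by
  ext x
  simp only [subcurve, Set.mem_iUnion]
  constructor
  · rintro ⟨t, ⟨h1, h2⟩, h3, hx⟩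
    have ht : t = i := by
      have hle : (i : ℕ) ≤ (t : ℕ) := h1
      have hlt : (t : ℕ) < (i : ℕ) + 1 := h2
      exact Fin.ext (by omega)
    subst ht
    exact hx
  · intro hx
    exact ⟨i, ⟨le_refl i, by simp [Fin.lt_def]⟩, h, hx⟩

lemma err_succ (p : Fin n → Pt) (i : Fin n) (h : (i : ℕ) + 1 < n) :
    err p i ⟨(i : ℕ) + 1, h⟩ = 0 := by
  rw [err, subcurve_succ, hausdorffDist_self_zero]

lemma path_exists (p : Fin n → Pt) {ε : ℝ} (hε : 0 ≤ ε) (i j : Fin n) (hij : i < j) :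
    ∃ l, IsPath p ε i j l := by
  obtain ⟨d, hd⟩ : ∃ d, (j : ℕ) - (i : ℕ) = d := ⟨_, rfl⟩
  induction d using Nat.strong_induction_on generalizing i with
  | _ d IH =>
    have hij' : (i : ℕ) < (j : ℕ) := hij
    have hjn : (j : ℕ) < n := j.isLt
    by_cases hc : (i : ℕ) + 1 = (j : ℕ)
    · have hj : j = ⟨(i : ℕ) + 1, by omega⟩ := Fin.ext hc.symm
      refine ⟨[i, j], isPath_pair hij ?_⟩
      rw [hj, err_succ p i (by omega)]
      exact hε
    · have hi1n : (i : ℕ) + 1 < n := by omega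
      set i' : Fin n := ⟨(i : ℕ) + 1, hi1n⟩ with hi'def
      have hi' : i < i' := by simp [Fin.lt_def, hi'def]
      have h1 : i' < j := by
        rw [Fin.lt_def]; simp [hi'def]; omega
      obtain ⟨l, hl⟩ := IH ((j : ℕ) - (i' : ℕ)) (by simp [hi'def]; omega) i' h1 rfl
      have herr : err p i i' ≤ ε := by
        rw [hi'def, err_succ p i hi1n]; exact hε
      exact ⟨i :: l, isPath_cons hl hi' herr⟩

lemma minCost_le {p : Fin n → Pt} {ε : ℝ} {c : Fin n → Fin n → ℕ} {i j : Fin n}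
    {l : List (Fin n)} (h : IsPath p ε i j l) : minCost p ε c i j ≤ pathCost c l :=
  Nat.sInf_le ⟨l, h, rfl⟩

lemma minCost_exists {p : Fin n → Pt} {ε : ℝ} (hε : 0 ≤ ε) (c : Fin n → Fin n → ℕ)
    {i j : Fin n} (hij : i < j) :
    ∃ l, IsPath p ε i j l ∧ pathCost c l = minCost p ε c i j := by
  have hne : {s : ℕ | ∃ l, IsPath p ε i j l ∧ pathCost c l = s}.Nonempty := by
    obtain ⟨l, hl⟩ := path_exists p hε i j hij
    exact ⟨pathCost c l, l, hl, rfl⟩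
  exact Nat.sInf_mem hne

lemma minCost_concat {p : Fin n → Pt} {ε ε' : ℝ} (hε' : 0 ≤ ε') (c : Fin n → Fin n → ℕ) :
    ∀ (l : List (Fin n)) (x z : Fin n), IsPath p ε x z l →
      ∃ l', IsPath p ε' x z l' ∧
        pathCost c l' = ((edges l).map (fun e => minCost p ε' c e.1 e.2)).sum
  | [], x, z, h => by obtain ⟨_, hh, _, _⟩ := h; simp at hh
  | [a], x, z, h => by
      obtain ⟨_, hh, hl, _⟩ := h
      simp at hh hl
      refine ⟨[x], ⟨List.isChain_singleton x, rfl, ?_, by simp [edges]⟩, by simp [pathCost, edges]⟩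
      simp [← hh, hl]
  | a :: b :: t, x, z, h => by
      obtain ⟨hc, hh, hl, hE⟩ := h
      have hax : a = x := by simpa using hh
      subst hax
      have hab : a < b := (List.isChain_cons_cons.1 hc).1
      obtain ⟨l0, hl0, hcost0⟩ := minCost_exists hε' c hab
      have htail : IsPath p ε b z (b :: t) := by
        refine ⟨(List.isChain_cons_cons.1 hc).2, rfl, by simpa using hl, ?_⟩
        intro e he
        exact hE e (by rw [edges_cons]; exact List.mem_cons_of_mem _ he)
      obtain ⟨l1, hl1, hcost1⟩ := minCost_concat hε' c (b :: t) b z htail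
      obtain ⟨hpath, hpc⟩ := isPath_append hl0 hl1
      refine ⟨l0 ++ l1.tail, hpath, ?_⟩
      rw [hpc c, hcost0, hcost1, edges_cons]
      simp

end Aux

/-- For `2 ≤ k ≤ m` and any shortcut `(i, j)` valid for `ε (k-1)`,
the DP cost values satisfy `c k (i,j) = c (k-1) (i,j) + 1`. -/
theorem cost_increment {n m : ℕ} (hn : 2 ≤ n) (hm : 1 ≤ m) (p : Fin n → Pt)
    (ε : ℕ → ℝ) (hε1 : 0 < ε 1)
    (hεmono : ∀ k, 1 ≤ k → k < m → ε k < ε (k + 1))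
    (c : ℕ → Fin n → Fin n → ℕ)
    (hc1 : ∀ i j : Fin n, i < j → err p i j ≤ ε 1 → c 1 i j = 1)
    (hck : ∀ k, 2 ≤ k → k ≤ m → ∀ i j : Fin n, i < j → err p i j ≤ ε k →
      c k i j = 1 + minCost p (ε (k - 1)) (c (k - 1)) i j) :
    ∀ k, 2 ≤ k → k ≤ m → ∀ i j : Fin n, i < j → err p i j ≤ ε (k - 1) →
      c k i j = c (k - 1) i j + 1 := by
  have hεpos : ∀ k, 1 ≤ k → k ≤ m → 0 < ε k := by
    intro k hk1 hkm
    induction k with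
    | zero => omega
    | succ k IH =>
      rcases Nat.lt_or_ge 1 (k + 1) with h | h
      · exact lt_trans (IH (by omega) (by omega)) (hεmono k (by omega) (by omega))
      · have hk : k + 1 = 1 := by omega
        rw [hk]; exact hε1
  have key : ∀ k, 1 ≤ k → k ≤ m → ∀ i j : Fin n, i < j → err p i j ≤ ε k →
      ∀ l, IsPath p (ε k) i j l → c k i j ≤ pathCost (c k) l := by
    intro k hk1 hkm i j hij herr l hl
    have hl' := hl
    obtain ⟨hch, hh, hlast, hE⟩ := hl'
    obtain ⟨l', rfl⟩ : ∃ l', l = i :: l' := by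
      cases l with
      | nil => simp at hh
      | cons a t => simp at hh; exact ⟨t, by rw [hh]⟩
    obtain ⟨b, t, rfl⟩ : ∃ b t, l' = b :: t := by
      cases l' with
      | nil =>
        simp at hlast
        exact absurd (Fin.ext_iff.1 hlast) (by have := Fin.lt_def.1 hij; omega)
      | cons b t => exact ⟨b, t, rfl⟩
    have hib : i < b := (List.isChain_cons_cons.1 hch).1
    have heib : err p i b ≤ ε k := hE (i, b) (by rw [edges_cons]; exact List.mem_cons_self)
    rcases eq_or_lt_of_le hk1 with hk | hk2
    · -- k = 1
      rw [← hk] at heib herr ⊢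
      rw [hc1 i j hij herr, pathCost_cons, hc1 i b hib heib]
      omega
    · -- 2 ≤ k
      have hk2' : 2 ≤ k := hk2
      have hεpos' : (0:ℝ) ≤ ε (k - 1) := le_of_lt (hεpos (k - 1) (by omega) (by omega))
      obtain ⟨l'', hl'', hcost''⟩ := minCost_concat hεpos' (c (k - 1)) (i :: b :: t) i j hl
      have hmin : minCost p (ε (k - 1)) (c (k - 1)) i j ≤
          ((edges (i :: b :: t)).map
            (fun e => minCost p (ε (k - 1)) (c (k - 1)) e.1 e.2)).sum := by
        rw [← hcost'']; exact minCost_le hl''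
      have hedgecost : ∀ e ∈ edges (i :: b :: t),
          c k e.1 e.2 = 1 + minCost p (ε (k - 1)) (c (k - 1)) e.1 e.2 := by
        intro e he
        exact hck k hk2' hkm e.1 e.2 (edges_rel _ hch e he) (hE e he)
      have hsum : ((edges (b :: t)).map
            (fun e => minCost p (ε (k - 1)) (c (k - 1)) e.1 e.2)).sum ≤
          ((edges (b :: t)).map (fun e => c k e.1 e.2)).sum := by
        refine List.sum_le_sum ?_
        intro e he
        rw [hedgecost e (by rw [edges_cons]; exact List.mem_cons_of_mem _ he)]
        omega
      rw [hck k hk2' hkm i j hij herr]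
      have h1 : pathCost (c k) (i :: b :: t) = c k i b +
          ((edges (b :: t)).map (fun e => c k e.1 e.2)).sum := by
        rw [pathCost_cons]; rfl
      have h2 : c k i b = 1 + minCost p (ε (k - 1)) (c (k - 1)) i b :=
        hedgecost (i, b) (by rw [edges_cons]; exact List.mem_cons_self)
      have h3 : ((edges (i :: b :: t)).map
            (fun e => minCost p (ε (k - 1)) (c (k - 1)) e.1 e.2)).sum =
          minCost p (ε (k - 1)) (c (k - 1)) i b +
          ((edges (b :: t)).map
            (fun e => minCost p (ε (k - 1)) (c (k - 1)) e.1 e.2)).sum := by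
        rw [edges_cons]; simp
      omega
  intro k hk2 hkm i j hij herr
  have hkk : k - 1 + 1 = k := by omega
  have herrk : err p i j ≤ ε k := by
    have := hεmono (k - 1) (by omega) (by omega)
    rw [hkk] at this
    exact le_trans herr (le_of_lt this)
  have hεpos' : (0:ℝ) ≤ ε (k - 1) := le_of_lt (hεpos (k - 1) (by omega) (by omega))
  have hle : minCost p (ε (k - 1)) (c (k - 1)) i j ≤ c (k - 1) i j := by
    have := minCost_le (c := c (k - 1)) (isPath_pair hij herr)
    rwa [pathCost_pair] at this
  have hge : c (k - 1) i j ≤ minCost p (ε (k - 1)) (c (k - 1)) i j := by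
    obtain ⟨l, hl, hcost⟩ := minCost_exists hεpos' (c (k - 1)) hij
    rw [← hcost]
    exact key (k - 1) (by omega) (by omega) i j hij herr l hl
  rw [hck k hk2 hkm i j hij herrk, le_antisymm hle hge]
  omega
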